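/- Let A be a commutative ring in which 2 is invertible and let F, a ∈ A. Let B := A[u, v]/(uv − F, u³ + v³ − 2a), let τ be the A-algebra involution of B with τ(u) = v and τ(v) = u, and set w := u + v ∈ B. Then w³ − 3·F·w − 2a = 0 in B, the subalgebra B^τ of τ-invariant elements is a free A-module with basis {1, w, w²}, and B^τ is isomorphic as an A-algebra to A[t]/(t³ − 3·F·t − 2a). -/

import Mathlib

noncomputable section

/-- The ideal `(uv − F, u³ + v³ − 2a)` in `A[u, v]`. -/
def dihedralIdeal (A : Type) [CommRing A] (n : ℕ) (F a : A) :
    Ideal (MvPolynomial (Fin 2) A) :=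
  Ideal.span {MvPolynomial.X 0 * MvPolynomial.X 1 - MvPolynomial.C F,
    MvPolynomial.X 0 ^ n + MvPolynomial.X 1 ^ n - MvPolynomial.C (2 * a)}

/-- The ring `B = A[u, v]/(uv − F, uⁿ + vⁿ − 2a)`, the coordinate ring of the simple
dihedral cover of `Spec A` determined by the data `F` and `a`. -/
abbrev DihedralCoverRing (A : Type) [CommRing A] (n : ℕ) (F a : A) : Type :=
  MvPolynomial (Fin 2) A ⧸ dihedralIdeal A n F a

/-- The image `u` of the first variable in `B`. -/
def uElt (A : Type) [CommRing A] (n : ℕ) (F a : A) : DihedralCoverRing A n F a :=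
  Ideal.Quotient.mk _ (MvPolynomial.X 0)

/-- The image `v` of the second variable in `B`. -/
def vElt (A : Type) [CommRing A] (n : ℕ) (F a : A) : DihedralCoverRing A n F a :=
  Ideal.Quotient.mk _ (MvPolynomial.X 1)

/-- The subalgebra of `τ`-invariant elements of `B`. -/
def fixedSubalgebra (A : Type) [CommRing A] (n : ℕ) (F a : A)
    (τ : DihedralCoverRing A n F a ≃ₐ[A] DihedralCoverRing A n F a) :
    Subalgebra A (DihedralCoverRing A n F a) :=
  AlgHom.equalizer (τ : DihedralCoverRing A n F a ≃ₐ[A] DihedralCoverRing A n F a)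
    ((AlgEquiv.refl : DihedralCoverRing A n F a ≃ₐ[A] DihedralCoverRing A n F a) :
      DihedralCoverRing A n F a →ₐ[A] DihedralCoverRing A n F a)

namespace Dih12

set_option maxHeartbeats 1000000
set_option synthInstance.maxHeartbeats 1000000

open Polynomial AdjoinRoot

variable (A : Type) [CommRing A] (F a : A)

abbrev cub : Polynomial A := X ^ 3 - Polynomial.C (3 * F) * X - Polynomial.C (2 * a)

lemma cub_monic : (cub A F a).Monic := by
  have : cub A F a = X ^ (2 + 1) - (Polynomial.C (3 * F) * X + Polynomial.C (2 * a)) := by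
    ring
  rw [this]
  apply monic_X_pow_sub
  refine lt_of_le_of_lt ?_ (by norm_num : (2 : WithBot ℕ) < (2 + 1 : ℕ))
  apply le_trans (degree_add_le _ _)
  simp only [sup_le_iff]
  refine ⟨le_trans (degree_mul_le _ _) ?_, le_trans degree_C_le (by norm_num)⟩
  calc (Polynomial.C (3*F)).degree + Polynomial.X.degree ≤ 0 + 1 := by
        gcongr
        · exact degree_C_le
        · exact degree_X_le
    _ ≤ 2 := by norm_num

lemma cub_natDegree [Nontrivial A] : (cub A F a).natDegree = 3 := by
  unfold cub; compute_degree!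

abbrev Cring := AdjoinRoot (cub A F a)

def t : Cring A F a := root _

lemma t_rel : (t A F a) ^ 3 =
    3 * algebraMap A (Cring A F a) F * t A F a + 2 * algebraMap A (Cring A F a) a := by
  have h : Polynomial.aeval (t A F a) (cub A F a) = 0 := by
    rw [t, aeval_eq, mk_self]
  simp only [cub, map_sub, map_mul, map_pow, aeval_X, aeval_C, map_ofNat] at h
  linear_combination h

abbrev quad : Polynomial (Cring A F a) :=
  X ^ 2 - Polynomial.C (t A F a) * X + Polynomial.C (algebraMap A (Cring A F a) F)

lemma quad_monic : (quad A F a).Monic := by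
  have : quad A F a = X ^ (1 + 1) -
      (Polynomial.C (t A F a) * X - Polynomial.C (algebraMap A (Cring A F a) F)) := by
    ring
  rw [this]
  apply monic_X_pow_sub
  refine lt_of_le_of_lt ?_ (by norm_num : (1 : WithBot ℕ) < (1 + 1 : ℕ))
  apply le_trans (degree_sub_le _ _)
  simp only [sup_le_iff]
  refine ⟨le_trans (degree_mul_le _ _) ?_, le_trans degree_C_le (by norm_num)⟩
  calc (Polynomial.C (t A F a)).degree + Polynomial.X.degree ≤ 0 + 1 := by
        gcongr
        · exact degree_C_le
        · exact degree_X_le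
    _ ≤ 1 := by norm_num

def pbC : PowerBasis A (Cring A F a) := powerBasis' (cub_monic A F a)

instance [Nontrivial A] : Nontrivial (Cring A F a) := by
  refine nontrivial_of_ne ((pbC A F a).basis ⟨0, ?_⟩) 0 (Module.Basis.ne_zero _ _)
  rw [pbC, powerBasis'_dim, cub_natDegree]
  norm_num

lemma quad_natDegree [Nontrivial A] : (quad A F a).natDegree = 2 := by
  unfold quad; compute_degree!

lemma quad_degree [Nontrivial A] : (quad A F a).degree = 2 := by
  rw [Polynomial.degree_eq_natDegree (quad_monic A F a).ne_zero, quad_natDegree]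
  rfl

abbrev Dring := AdjoinRoot (quad A F a)

def uD : Dring A F a := root _

def tD : Dring A F a := algebraMap (Cring A F a) (Dring A F a) (t A F a)

lemma algebraMap_AD (x : A) :
    algebraMap A (Dring A F a) x = algebraMap (Cring A F a) (Dring A F a) (algebraMap A _ x) :=
  IsScalarTower.algebraMap_apply A (Cring A F a) (Dring A F a) x

lemma uD_rel : (uD A F a) ^ 2 = tD A F a * uD A F a - algebraMap A (Dring A F a) F := by
  have h : Polynomial.aeval (uD A F a) (quad A F a) = 0 := by
    rw [uD, aeval_eq, mk_self]
  simp only [quad, map_add, map_sub, map_mul, map_pow, aeval_X, aeval_C] at h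
  rw [tD, algebraMap_AD A F a F]
  linear_combination h

lemma tD_rel : (tD A F a) ^ 3 =
    3 * algebraMap A (Dring A F a) F * tD A F a + 2 * algebraMap A (Dring A F a) a := by
  have h := congrArg (algebraMap (Cring A F a) (Dring A F a)) (t_rel A F a)
  simp only [map_pow, map_add, map_mul, map_ofNat, ← algebraMap_AD] at h
  rw [tD]
  linear_combination h

end Dih12

namespace Dih12

open Polynomial AdjoinRoot

variable (A : Type) [CommRing A] (F a : A)

lemma algebraMap_B (x : A) : algebraMap A (DihedralCoverRing A 3 F a) x
    = Ideal.Quotient.mk (dihedralIdeal A 3 F a) (MvPolynomial.C x) := rfl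

lemma uv_rel : uElt A 3 F a * vElt A 3 F a = algebraMap A (DihedralCoverRing A 3 F a) F := by
  rw [uElt, vElt, algebraMap_B, ← map_mul, ← sub_eq_zero, ← map_sub,
    Ideal.Quotient.eq_zero_iff_mem]
  exact Ideal.subset_span (Set.mem_insert _ _)

lemma cube_rel : uElt A 3 F a ^ 3 + vElt A 3 F a ^ 3
    = algebraMap A (DihedralCoverRing A 3 F a) (2 * a) := by
  rw [uElt, vElt, algebraMap_B, ← map_pow, ← map_pow, ← map_add, ← sub_eq_zero, ← map_sub,
    Ideal.Quotient.eq_zero_iff_mem]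
  exact Ideal.subset_span (Set.mem_insert_of_mem _ rfl)

lemma w_rel : (uElt A 3 F a + vElt A 3 F a) ^ 3
    - algebraMap A (DihedralCoverRing A 3 F a) (3 * F) * (uElt A 3 F a + vElt A 3 F a)
    - algebraMap A (DihedralCoverRing A 3 F a) (2 * a) = 0 := by
  have h1 := uv_rel A F a
  have h2 := cube_rel A F a
  simp only [map_mul, map_ofNat] at h2 ⊢
  linear_combination (3 * (uElt A 3 F a + vElt A 3 F a)) * h1 + h2

lemma aeval_w : Polynomial.aeval (uElt A 3 F a + vElt A 3 F a) (cub A F a) = 0 := by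
  have h := w_rel A F a
  simp only [cub, map_sub, map_mul, map_pow, aeval_X, aeval_C, map_ofNat]
  simp only [map_mul, map_ofNat] at h
  linear_combination h

def φalg : Cring A F a →ₐ[A] DihedralCoverRing A 3 F a :=
  liftAlgHom _ (Algebra.ofId _ _) (uElt A 3 F a + vElt A 3 F a) (aeval_w A F a)

lemma φ_t : φalg A F a (t A F a) = uElt A 3 F a + vElt A 3 F a := by
  unfold φalg t
  exact liftAlgHom_root _ _ _ _

def ψpoly : MvPolynomial (Fin 2) A →ₐ[A] Dring A F a :=
  MvPolynomial.aeval ![uD A F a, tD A F a - uD A F a]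

lemma ψpoly_vanish : ∀ p ∈ dihedralIdeal A 3 F a, ψpoly A F a p = 0 := by
  have hle : dihedralIdeal A 3 F a ≤ RingHom.ker (ψpoly A F a).toRingHom := by
    rw [dihedralIdeal, Ideal.span_le]
    rintro q hq
    simp only [Set.mem_insert_iff, Set.mem_singleton_iff] at hq
    have h2 := uD_rel A F a
    rcases hq with rfl | rfl
    · show ψpoly A F a _ = 0
      simp only [ψpoly, map_sub, map_mul, MvPolynomial.aeval_X, MvPolynomial.aeval_C,
        Matrix.cons_val_zero, Matrix.cons_val_one, Matrix.head_cons]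
      linear_combination - h2
    · show ψpoly A F a _ = 0
      have h3 := tD_rel A F a
      simp only [ψpoly, map_add, map_sub, map_mul, map_pow, MvPolynomial.aeval_X,
        MvPolynomial.aeval_C, Matrix.cons_val_zero, Matrix.cons_val_one, Matrix.head_cons,
        map_ofNat]
      linear_combination h3 + 3 * tD A F a * h2
  exact fun p hp => hle hp

def ψalg : DihedralCoverRing A 3 F a →ₐ[A] Dring A F a :=
  Ideal.Quotient.liftₐ _ (ψpoly A F a) (ψpoly_vanish A F a)

lemma ψ_mk (p : MvPolynomial (Fin 2) A) :
    ψalg A F a (Ideal.Quotient.mk (dihedralIdeal A 3 F a) p) = ψpoly A F a p := by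
  rw [ψalg, Ideal.Quotient.liftₐ_apply]
  rfl

lemma ψ_u : ψalg A F a (uElt A 3 F a) = uD A F a := by
  rw [uElt, ψ_mk, ψpoly, MvPolynomial.aeval_X]
  rfl

lemma ψ_v : ψalg A F a (vElt A 3 F a) = tD A F a - uD A F a := by
  rw [vElt, ψ_mk, ψpoly, MvPolynomial.aeval_X]
  rfl

lemma quad_eval₂ :
    Polynomial.eval₂ (φalg A F a).toRingHom (uElt A 3 F a) (quad A F a) = 0 := by
  simp only [quad, eval₂_add, eval₂_sub, eval₂_mul, eval₂_pow, eval₂_X, eval₂_C]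
  rw [show (φalg A F a).toRingHom (t A F a) = uElt A 3 F a + vElt A 3 F a from φ_t A F a,
    show (φalg A F a).toRingHom (algebraMap A _ F) = algebraMap A _ F from (φalg A F a).commutes F]
  linear_combination - uv_rel A F a

def ρhom : Dring A F a →+* DihedralCoverRing A 3 F a :=
  AdjoinRoot.lift (φalg A F a).toRingHom (uElt A 3 F a) (quad_eval₂ A F a)

lemma ρhom_algebraMap (c : Cring A F a) :
    ρhom A F a (algebraMap (Cring A F a) (Dring A F a) c) = φalg A F a c := by
  rw [ρhom, AdjoinRoot.algebraMap_eq]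
  exact AdjoinRoot.lift_of _

def ρalg : Dring A F a →ₐ[A] DihedralCoverRing A 3 F a :=
  { ρhom A F a with
    commutes' := fun x => by
      show ρhom A F a (algebraMap A (Dring A F a) x) = algebraMap A _ x
      rw [algebraMap_AD A F a x, ρhom_algebraMap]
      exact (φalg A F a).commutes x }

lemma ρalg_apply (x : Dring A F a) : ρalg A F a x = ρhom A F a x := rfl

lemma ρ_uD : ρalg A F a (uD A F a) = uElt A 3 F a := by
  rw [ρalg_apply]
  unfold ρhom uD
  exact AdjoinRoot.lift_root _

lemma ρ_tD : ρalg A F a (tD A F a) = uElt A 3 F a + vElt A 3 F a := by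
  rw [ρalg_apply, tD, ρhom_algebraMap, φ_t]

lemma ρψ (x : DihedralCoverRing A 3 F a) : ρalg A F a (ψalg A F a x) = x := by
  obtain ⟨p, rfl⟩ := Ideal.Quotient.mk_surjective x
  have key : ((ρalg A F a).comp (ψalg A F a)).comp
      (Ideal.Quotient.mkₐ A (dihedralIdeal A 3 F a))
      = Ideal.Quotient.mkₐ A (dihedralIdeal A 3 F a) := by
    apply MvPolynomial.algHom_ext
    intro i
    fin_cases i
    · show ρalg A F a (ψalg A F a (Ideal.Quotient.mk _ (MvPolynomial.X 0))) = _
      rw [← uElt, ψ_u, ρ_uD]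
      rfl
    · show ρalg A F a (ψalg A F a (Ideal.Quotient.mk _ (MvPolynomial.X 1))) = _
      rw [← vElt, ψ_v, map_sub, ρ_uD, ρ_tD]
      show uElt A 3 F a + vElt A 3 F a - uElt A 3 F a = vElt A 3 F a
      ring
  exact DFunLike.congr_fun key p

lemma aeval_v' : Polynomial.aeval (tD A F a - uD A F a) (quad A F a) = 0 := by
  simp only [quad, map_add, map_sub, map_mul, map_pow, aeval_X, aeval_C]
  rw [show algebraMap (Cring A F a) (Dring A F a) (t A F a) = tD A F a from rfl,
    ← algebraMap_AD A F a F]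
  linear_combination uD_rel A F a

def σalg : Dring A F a →ₐ[Cring A F a] Dring A F a :=
  liftAlgHom _ (Algebra.ofId _ _) (tD A F a - uD A F a) (aeval_v' A F a)

lemma σ_uD : σalg A F a (uD A F a) = tD A F a - uD A F a := by
  unfold σalg uD
  exact liftAlgHom_root _ _ _ _

lemma σ_algebraMap (c : Cring A F a) :
    σalg A F a (algebraMap (Cring A F a) (Dring A F a) c)
    = algebraMap (Cring A F a) (Dring A F a) c := (σalg A F a).commutes c

end Dih12

namespace Dih12

open Polynomial AdjoinRoot

variable (A : Type) [CommRing A] (F a : A)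

lemma σ_tD : σalg A F a (tD A F a) = tD A F a := (σalg A F a).commutes (t A F a)

lemma ψφ (c : Cring A F a) :
    ψalg A F a (φalg A F a c) = algebraMap (Cring A F a) (Dring A F a) c := by
  have key : (ψalg A F a).comp (φalg A F a)
      = IsScalarTower.toAlgHom A (Cring A F a) (Dring A F a) := by
    apply AdjoinRoot.algHom_ext
    show ψalg A F a (φalg A F a (t A F a)) = tD A F a
    rw [φ_t, map_add, ψ_u, ψ_v]
    ring
  exact DFunLike.congr_fun key c

lemma algebraMapCD_ker [Nontrivial A] (c : Cring A F a)
    (h : algebraMap (Cring A F a) (Dring A F a) c = 0) : c = 0 := by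
  set pb := powerBasis' (quad_monic A F a) with hpb
  have hipos : 0 < pb.dim := by rw [hpb, powerBasis'_dim, quad_natDegree]; norm_num
  have h1 : algebraMap (Cring A F a) (Dring A F a) c = c • pb.basis ⟨0, hipos⟩ := by
    rw [pb.basis_eq_pow, pow_zero, Algebra.smul_def, mul_one]
  have h2 := congrArg pb.basis.repr (h1.symm.trans h)
  rw [map_smul, map_zero, pb.basis.repr_self] at h2
  have h3 := DFunLike.congr_fun h2 ⟨0, hipos⟩
  simpa using h3

lemma φ_inj [Nontrivial A] : Function.Injective (φalg A F a) := by
  intro x y h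
  have h' := congrArg (ψalg A F a) h
  rw [ψφ, ψφ] at h'
  have := algebraMapCD_ker A F a (x - y) (by rw [map_sub, h', sub_self])
  exact sub_eq_zero.mp this

lemma comm (τ : DihedralCoverRing A 3 F a ≃ₐ[A] DihedralCoverRing A 3 F a)
    (hτu : τ (uElt A 3 F a) = vElt A 3 F a) (hτv : τ (vElt A 3 F a) = uElt A 3 F a)
    (x : DihedralCoverRing A 3 F a) :
    ψalg A F a (τ x) = σalg A F a (ψalg A F a x) := by
  obtain ⟨p, rfl⟩ := Ideal.Quotient.mk_surjective x
  have key : ((ψalg A F a).comp τ.toAlgHom).comp (Ideal.Quotient.mkₐ A (dihedralIdeal A 3 F a))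
      = (((σalg A F a).restrictScalars A).comp (ψalg A F a)).comp
        (Ideal.Quotient.mkₐ A (dihedralIdeal A 3 F a)) := by
    apply MvPolynomial.algHom_ext
    intro i
    fin_cases i
    · show ψalg A F a (τ (Ideal.Quotient.mk _ (MvPolynomial.X 0)))
        = σalg A F a (ψalg A F a (Ideal.Quotient.mk _ (MvPolynomial.X 0)))
      rw [← uElt, hτu, ψ_v, ψ_u, σ_uD]
    · show ψalg A F a (τ (Ideal.Quotient.mk _ (MvPolynomial.X 1)))
        = σalg A F a (ψalg A F a (Ideal.Quotient.mk _ (MvPolynomial.X 1)))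
      rw [← vElt, hτv, ψ_u, ψ_v, map_sub, σ_uD, σ_tD]
      ring
  exact DFunLike.congr_fun key p

lemma fixed_mem (h2 : IsUnit (2 : A)) [Nontrivial A]
    (τ : DihedralCoverRing A 3 F a ≃ₐ[A] DihedralCoverRing A 3 F a)
    (hτu : τ (uElt A 3 F a) = vElt A 3 F a) (hτv : τ (vElt A 3 F a) = uElt A 3 F a)
    (x : DihedralCoverRing A 3 F a) (hx : τ x = x) :
    x ∈ (φalg A F a).range := by
  obtain ⟨q, hq⟩ := AdjoinRoot.mk_surjective (ψalg A F a x)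
  set r := q %ₘ quad A F a with hr
  have hmk : AdjoinRoot.mk (quad A F a) q = AdjoinRoot.mk _ r := by
    conv_lhs => rw [← modByMonic_add_div q (quad A F a)]
    rw [map_add, map_mul, mk_self, zero_mul, add_zero]
  have hdeg : r.degree ≤ 1 := by
    have hlt := degree_modByMonic_lt q (quad_monic A F a)
    rw [quad_degree A F a] at hlt
    exact Order.le_of_lt_succ (by exact_mod_cast hlt)
  set c0 := r.coeff 0 with hc0
  set c1 := r.coeff 1 with hc1def
  have hrr : r = Polynomial.C c1 * X + Polynomial.C c0 := eq_X_add_C_of_degree_le_one hdeg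
  have hx' : ψalg A F a x
      = algebraMap (Cring A F a) (Dring A F a) c1 * uD A F a
        + algebraMap (Cring A F a) (Dring A F a) c0 := by
    rw [← hq, hmk, hrr, map_add, map_mul, mk_C, mk_C, mk_X, ← AdjoinRoot.algebraMap_eq]
    rfl
  have hτx : σalg A F a (ψalg A F a x) = ψalg A F a x := by
    have h := comm A F a τ hτu hτv x
    rw [hx] at h
    exact h.symm
  rw [hx', map_add, map_mul, σ_uD, σ_algebraMap, σ_algebraMap] at hτx
  set pb := powerBasis' (quad_monic A F a) with hpb
  have hdim : pb.dim = 2 := by rw [hpb, powerBasis'_dim, quad_natDegree]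
  set b2 := pb.basis.reindex (finCongr hdim) with hb2
  have hb0 : b2 0 = 1 := by
    rw [hb2, Module.Basis.reindex_apply, pb.basis_eq_pow]
    simp [Fin.coe_cast]
  have hb1 : b2 1 = uD A F a := by
    rw [hb2, Module.Basis.reindex_apply, pb.basis_eq_pow]
    simp only [finCongr_symm, finCongr_apply, Fin.coe_cast, Fin.val_one, pow_one]
    rw [hpb, powerBasis'_gen]
    rfl
  have hli := b2.linearIndependent
  rw [Fintype.linearIndependent_iff] at hli
  have hsum : ∑ i, (![t A F a * c1, -(2 * c1)]) i • b2 i = 0 := by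
    rw [Fin.sum_univ_two]
    simp only [Matrix.cons_val_zero, Matrix.cons_val_one, Matrix.head_cons, hb0, hb1]
    rw [Algebra.smul_def, Algebra.smul_def, mul_one, map_mul, map_neg, map_mul, map_ofNat]
    rw [show algebraMap (Cring A F a) (Dring A F a) (t A F a) = tD A F a from rfl]
    linear_combination hτx
  have h1 := hli ![t A F a * c1, -(2 * c1)] hsum 1
  simp only [Matrix.cons_val_one, Matrix.head_cons, Matrix.cons_val_zero, neg_eq_zero] at h1
  have h2C : IsUnit (2 : Cring A F a) := by
    have := h2.map (algebraMap A (Cring A F a))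
    rwa [map_ofNat] at this
  have hc1 : c1 = 0 := by rwa [IsUnit.mul_right_eq_zero h2C] at h1
  refine ⟨c0, ?_⟩
  have hx'' : ψalg A F a x = algebraMap (Cring A F a) (Dring A F a) c0 := by
    rw [hx', hc1, map_zero, zero_mul, zero_add]
  have hfin := ρψ A F a x
  rw [hx''] at hfin
  rw [show ρalg A F a (algebraMap (Cring A F a) (Dring A F a) c0) = φalg A F a c0
    from ρhom_algebraMap A F a c0] at hfin
  exact hfin

lemma range_le_fixed (τ : DihedralCoverRing A 3 F a ≃ₐ[A] DihedralCoverRing A 3 F a)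
    (hτu : τ (uElt A 3 F a) = vElt A 3 F a) (hτv : τ (vElt A 3 F a) = uElt A 3 F a)
    (c : Cring A F a) : τ (φalg A F a c) = φalg A F a c := by
  have key : τ.toAlgHom.comp (φalg A F a) = φalg A F a := by
    apply AdjoinRoot.algHom_ext
    show τ (φalg A F a (t A F a)) = φalg A F a (t A F a)
    rw [φ_t, map_add, hτu, hτv, add_comm]
  exact DFunLike.congr_fun key c

lemma fixed_eq_range (h2 : IsUnit (2 : A)) [Nontrivial A]
    (τ : DihedralCoverRing A 3 F a ≃ₐ[A] DihedralCoverRing A 3 F a)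
    (hτu : τ (uElt A 3 F a) = vElt A 3 F a) (hτv : τ (vElt A 3 F a) = uElt A 3 F a) :
    (φalg A F a).range = fixedSubalgebra A 3 F a τ := by
  ext x
  constructor
  · rintro ⟨c, rfl⟩
    exact range_le_fixed A F a τ hτu hτv c
  · intro hx
    exact fixed_mem A F a h2 τ hτu hτv x hx

end Dih12

namespace Dih12

open Polynomial AdjoinRoot

variable (A : Type) [CommRing A] (F a : A)

set_option synthInstance.maxHeartbeats 1000000 in
def fixEquiv [Nontrivial A] (h2 : IsUnit (2 : A))
    (τ : DihedralCoverRing A 3 F a ≃ₐ[A] DihedralCoverRing A 3 F a)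
    (hτu : τ (uElt A 3 F a) = vElt A 3 F a) (hτv : τ (vElt A 3 F a) = uElt A 3 F a) :
    Cring A F a ≃ₐ[A] (fixedSubalgebra A 3 F a τ) :=
  (AlgEquiv.ofInjective (φalg A F a) (φ_inj A F a)).trans
    (Subalgebra.equivOfEq _ _ (fixed_eq_range A F a h2 τ hτu hτv))

set_option synthInstance.maxHeartbeats 1000000 in
lemma fixEquiv_coe [Nontrivial A] (h2 : IsUnit (2 : A))
    (τ : DihedralCoverRing A 3 F a ≃ₐ[A] DihedralCoverRing A 3 F a)
    (hτu : τ (uElt A 3 F a) = vElt A 3 F a) (hτv : τ (vElt A 3 F a) = uElt A 3 F a)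
    (c : Cring A F a) :
    ((fixEquiv A F a h2 τ hτu hτv c : fixedSubalgebra A 3 F a τ) : DihedralCoverRing A 3 F a)
      = φalg A F a c := rfl

lemma pbC_dim [Nontrivial A] : (pbC A F a).dim = 3 := by
  rw [pbC, powerBasis'_dim, cub_natDegree]

set_option synthInstance.maxHeartbeats 1000000 in
def fixBasis [Nontrivial A] (h2 : IsUnit (2 : A))
    (τ : DihedralCoverRing A 3 F a ≃ₐ[A] DihedralCoverRing A 3 F a)
    (hτu : τ (uElt A 3 F a) = vElt A 3 F a) (hτv : τ (vElt A 3 F a) = uElt A 3 F a) :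
    Module.Basis (Fin 3) A (fixedSubalgebra A 3 F a τ) :=
  ((pbC A F a).basis.reindex (finCongr (pbC_dim A F a))).map
    (fixEquiv A F a h2 τ hτu hτv).toLinearEquiv

set_option synthInstance.maxHeartbeats 1000000 in
lemma fixBasis_coe [Nontrivial A] (h2 : IsUnit (2 : A))
    (τ : DihedralCoverRing A 3 F a ≃ₐ[A] DihedralCoverRing A 3 F a)
    (hτu : τ (uElt A 3 F a) = vElt A 3 F a) (hτv : τ (vElt A 3 F a) = uElt A 3 F a)
    (i : Fin 3) :
    ((fixBasis A F a h2 τ hτu hτv i : fixedSubalgebra A 3 F a τ) : DihedralCoverRing A 3 F a)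
      = (uElt A 3 F a + vElt A 3 F a) ^ (i : ℕ) := by
  rw [fixBasis, Module.Basis.map_apply, Module.Basis.reindex_apply, (pbC A F a).basis_eq_pow,
    AlgEquiv.toLinearEquiv_apply, fixEquiv_coe, map_pow]
  have : ((((finCongr (pbC_dim A F a)).symm i) : Fin (pbC A F a).dim) : ℕ) = (i : ℕ) := by
    simp [Fin.coe_cast]
  rw [this]
  congr 1
  rw [show (pbC A F a).gen = t A F a from rfl, φ_t]

end Dih12

/-!
STATEMENT 12: Let `A` be a commutative ring in which `2` is invertible and let `F, a ∈ A`.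
Let `B := A[u, v]/(uv − F, u³ + v³ − 2a)`, let `τ` be the `A`-algebra involution of `B` with
`τ(u) = v` and `τ(v) = u`, and set `w := u + v ∈ B`.  Then `w³ − 3·F·w − 2a = 0` in `B`, the
subalgebra `B^τ` of `τ`-invariant elements is a free `A`-module with basis `{1, w, w²}`, and
`B^τ` is isomorphic as an `A`-algebra to `A[t]/(t³ − 3·F·t − 2a)`.
-/

set_option synthInstance.maxHeartbeats 400000 in
theorem dihedralCoverRing_tau_invariants_triple_cover
    (A : Type) [CommRing A] (h2 : IsUnit (2 : A)) (F a : A)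
    (τ : DihedralCoverRing A 3 F a ≃ₐ[A] DihedralCoverRing A 3 F a)
    (hτu : τ (uElt A 3 F a) = vElt A 3 F a)
    (hτv : τ (vElt A 3 F a) = uElt A 3 F a) :
    (uElt A 3 F a + vElt A 3 F a) ^ 3 -
        algebraMap A (DihedralCoverRing A 3 F a) (3 * F) *
          (uElt A 3 F a + vElt A 3 F a) -
        algebraMap A (DihedralCoverRing A 3 F a) (2 * a) = 0 ∧
    (∃ b : Module.Basis (Fin 3) A (fixedSubalgebra A 3 F a τ),
      (b 0 : DihedralCoverRing A 3 F a) = 1 ∧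
      (b 1 : DihedralCoverRing A 3 F a) = uElt A 3 F a + vElt A 3 F a ∧
      (b 2 : DihedralCoverRing A 3 F a) = (uElt A 3 F a + vElt A 3 F a) ^ 2) ∧
    Nonempty ((fixedSubalgebra A 3 F a τ) ≃ₐ[A]
      AdjoinRoot (Polynomial.X ^ 3 - Polynomial.C (3 * F) * Polynomial.X -
        Polynomial.C (2 * a) : Polynomial A)) := by
  rcases subsingleton_or_nontrivial A with hA | hA
  · haveI : Subsingleton (DihedralCoverRing A 3 F a) := Module.subsingleton A _
    haveI : Subsingleton (AdjoinRoot (Polynomial.X ^ 3 - Polynomial.C (3 * F) * Polynomial.X -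
        Polynomial.C (2 * a) : Polynomial A)) := Module.subsingleton A _
    haveI hF3 : Subsingleton (Fin 3 →₀ A) :=
      ⟨fun f g => Finsupp.ext fun i => Subsingleton.elim _ _⟩
    refine ⟨Subsingleton.elim _ _,
      ⟨Module.Basis.ofRepr (LinearEquiv.ofSubsingleton _ _),
        Subsingleton.elim _ _, Subsingleton.elim _ _, Subsingleton.elim _ _⟩,
      ⟨{ toFun := fun _ => 0, invFun := fun _ => 0,
         left_inv := fun x => Subsingleton.elim _ _,
         right_inv := fun x => Subsingleton.elim _ _,
         map_mul' := fun _ _ => Subsingleton.elim _ _,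
         map_add' := fun _ _ => Subsingleton.elim _ _,
         commutes' := fun _ => Subsingleton.elim _ _ }⟩⟩
  · refine ⟨Dih12.w_rel A F a,
      ⟨Dih12.fixBasis A F a h2 τ hτu hτv, ?_, ?_, ?_⟩,
      ⟨(Dih12.fixEquiv A F a h2 τ hτu hτv).symm⟩⟩
    · rw [Dih12.fixBasis_coe]
      norm_num
    · rw [Dih12.fixBasis_coe]
      norm_num
    · rw [Dih12.fixBasis_coe]
      norm_num
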